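/- Let π be a probability measure on (Ω,𝒮₁), r ∈ ℕ, 0 ≤ z ≤ r, and let X = (Δ₁,…,Δ_r), Y = (Λ₁,…,Λ_r) ∈ ℱ_{(pref(ℝ^r),π)} with Δ_j, Λ_j π-integrable for all j = 1,…,r. If (X,Y) ∈ R_{(pref(ℝ^r),π)}, then E_π(Δ_j) ≥ E_π(Λ_j) for all j = 1,…,r. -/

import Mathlib

open MeasureTheory
open scoped BigOperators

namespace GSD

/-- The strict part `P_R` of a binary relation `R`. -/
def strictPart {α : Type*} (R : α → α → Prop) (a b : α) : Prop := R a b ∧ ¬ R b a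

/-- The indifference part `I_R` of a binary relation `R`. -/
def indiffPart {α : Type*} (R : α → α → Prop) (a b : α) : Prop := R a b ∧ R b a

/-- `[A, R1, R2]` is a preference system: `R1` is a preorder on `A` and `R2` is a preorder
on `R1` (i.e. a reflexive-transitive relation supported on pairs belonging to `R1`). -/
structure IsPrefSystem {A : Type*} (R1 : A → A → Prop) (R2 : A × A → A × A → Prop) : Prop where
  refl1 : ∀ a, R1 a a
  trans1 : ∀ a b c, R1 a b → R1 b c → R1 a c
  sub2 : ∀ p q, R2 p q → R1 p.1 p.2 ∧ R1 q.1 q.2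
  refl2 : ∀ p, R1 p.1 p.2 → R2 p p
  trans2 : ∀ p q r, R2 p q → R2 q r → R2 p r

/-- `u` is a representation of the preference system `[A, R1, R2]`. -/
def IsRepresentation {A : Type*} (R1 : A → A → Prop) (R2 : A × A → A × A → Prop)
    (u : A → ℝ) : Prop :=
  (∀ a b, R1 a b → (u b ≤ u a ∧ (u a = u b ↔ R1 b a))) ∧
  (∀ a b c d, R2 (a, b) (c, d) →
    (u c - u d ≤ u a - u b ∧ (u a - u b = u c - u d ↔ R2 (c, d) (a, b))))

/-- A preference system is consistent if it admits a representation. -/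
def Consistent {A : Type*} (R1 : A → A → Prop) (R2 : A × A → A × A → Prop) : Prop :=
  ∃ u, IsRepresentation R1 R2 u

/-- The preference system is bounded with minimal element `a0` and maximal element `a1`. -/
def Bounded {A : Type*} (R1 : A → A → Prop) (a0 a1 : A) : Prop :=
  (∀ a, R1 a1 a) ∧ (∀ a, R1 a a0) ∧ strictPart R1 a1 a0

/-- Membership in the normalized representation set `𝒩_𝒜`. -/
def NormRep {A : Type*} (R1 : A → A → Prop) (R2 : A × A → A × A → Prop) (a0 a1 : A)
    (u : A → ℝ) : Prop :=
  IsRepresentation R1 R2 u ∧ u a0 = 0 ∧ u a1 = 1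

/-- Membership in `𝒩^δ_𝒜`: normalized representations separating strict pairs by at least `δ`. -/
def NormRepDelta {A : Type*} (R1 : A → A → Prop) (R2 : A × A → A × A → Prop) (a0 a1 : A)
    (δ : ℝ) (u : A → ℝ) : Prop :=
  NormRep R1 R2 a0 a1 u ∧
  (∀ a b, strictPart R1 a b → δ ≤ u a - u b) ∧
  (∀ c d e f, strictPart R2 (c, d) (e, f) → δ ≤ u c - u d - u e + u f)

/-- Membership in `ℱ_{(𝒜,π)}`: all representation-composites are integrable. -/
def memF {Ω A : Type*} [MeasurableSpace Ω] (π : Measure Ω)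
    (R1 : A → A → Prop) (R2 : A × A → A × A → Prop) (X : Ω → A) : Prop :=
  ∀ u, IsRepresentation R1 R2 u → Integrable (fun ω => u (X ω)) π

/-- The generalized stochastic dominance (GSD) relation `R_{(𝒜,π)}`. -/
def GSDrel {Ω A : Type*} [MeasurableSpace Ω] (π : Measure Ω)
    (R1 : A → A → Prop) (R2 : A × A → A × A → Prop) (X Y : Ω → A) : Prop :=
  ∀ u, IsRepresentation R1 R2 u → ∫ ω, u (Y ω) ∂π ≤ ∫ ω, u (X ω) ∂π

/-- The relation `R₁*` of `pref(ℝ^r)`: componentwise dominance. -/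
def R1star (r : ℕ) (x y : Fin r → ℝ) : Prop := ∀ j, y j ≤ x j

/-- The relation `R₂*` of `pref(ℝ^r)` with the first `z` dimensions cardinal and the
remaining ones ordinal. -/
def R2star (r z : ℕ) (p q : (Fin r → ℝ) × (Fin r → ℝ)) : Prop :=
  R1star r p.1 p.2 ∧ R1star r q.1 q.2 ∧
  (∀ j : Fin r, (j : ℕ) < z → q.1 j - q.2 j ≤ p.1 j - p.2 j) ∧
  (∀ j : Fin r, z ≤ (j : ℕ) → p.2 j ≤ q.2 j ∧ q.2 j ≤ q.1 j ∧ q.1 j ≤ p.1 j)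


lemma sum_zero_each {r : ℕ} (w : Fin r → ℝ) (hw : ∀ k, 0 < w k) (f : Fin r → ℝ)
    (hf : ∀ k, 0 ≤ f k) (h : ∑ k, w k * f k ≤ 0) : ∀ k, f k = 0 := by
  have hz : ∑ k, w k * f k = 0 :=
    le_antisymm h (Finset.sum_nonneg fun k _ => mul_nonneg (hw k).le (hf k))
  intro k
  have := (Finset.sum_eq_zero_iff_of_nonneg
    (fun k _ => mul_nonneg (hw k).le (hf k))).mp hz k (Finset.mem_univ k)
  have := mul_eq_zero.mp this
  rcases this with h' | h'
  · exact absurd h' (hw k).ne'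
  · exact h'

lemma linRep (r z : ℕ) (w : Fin r → ℝ) (hw : ∀ k, 0 < w k) :
    IsRepresentation (R1star r) (R2star r z) (fun x => ∑ k, w k * x k) := by
  constructor
  · intro a b hab
    refine ⟨Finset.sum_le_sum (fun k _ => mul_le_mul_of_nonneg_left (hab k) (hw k).le), ?_, ?_⟩
    · intro heq k
      have h0 : ∑ k, w k * (a k - b k) ≤ 0 := by
        simp only [mul_sub, Finset.sum_sub_distrib]
        linarith [heq]
      have := sum_zero_each w hw _ (fun k => by linarith [hab k]) h0 k
      linarith
    · intro hba
      exact Finset.sum_congr rfl (fun k _ => by rw [le_antisymm (hba k) (hab k)])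
  · intro a b c d h2
    obtain ⟨hab, hcd, hcard, hord⟩ := h2
    simp only at hab hcd hcard hord
    have hterm : ∀ k, c k - d k ≤ a k - b k := by
      intro k
      by_cases hk : (k : ℕ) < z
      · exact hcard k hk
      · obtain ⟨h1, h2', h3⟩ := hord k (le_of_not_gt hk)
        linarith
    have hle : ∑ k, w k * c k - ∑ k, w k * d k ≤ ∑ k, w k * a k - ∑ k, w k * b k := by
      rw [← Finset.sum_sub_distrib, ← Finset.sum_sub_distrib]
      refine Finset.sum_le_sum (fun k _ => ?_)
      rw [← mul_sub, ← mul_sub]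
      exact mul_le_mul_of_nonneg_left (hterm k) (hw k).le
    refine ⟨hle, ?_, ?_⟩
    · intro heq
      have h0 : ∑ k, w k * ((a k - b k) - (c k - d k)) ≤ 0 := by
        simp only [mul_sub, Finset.sum_sub_distrib]
        linarith [heq]
      have hke : ∀ k, (a k - b k) - (c k - d k) = 0 :=
        sum_zero_each w hw _ (fun k => by linarith [hterm k]) h0
      refine ⟨hcd, hab, ?_, ?_⟩
      · intro k _; linarith [hke k]
      · intro k hk
        obtain ⟨h1, h2', h3⟩ := hord k hk
        refine ⟨by linarith [hke k], by linarith, by linarith [hke k]⟩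
    · intro hrev
      obtain ⟨_, _, hcard', hord'⟩ := hrev
      simp only at hcard' hord'
      have hterm' : ∀ k, a k - b k ≤ c k - d k := by
        intro k
        by_cases hk : (k : ℕ) < z
        · exact hcard' k hk
        · obtain ⟨h1, h2', h3⟩ := hord' k (le_of_not_gt hk)
          linarith
      have hle' : ∑ k, w k * a k - ∑ k, w k * b k ≤ ∑ k, w k * c k - ∑ k, w k * d k := by
        rw [← Finset.sum_sub_distrib, ← Finset.sum_sub_distrib]
        refine Finset.sum_le_sum (fun k _ => ?_)
        rw [← mul_sub, ← mul_sub]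
        exact mul_le_mul_of_nonneg_left (hterm' k) (hw k).le
      linarith

/-- Proposition 7 iii) I.: GSD on `pref(ℝ^r)` implies componentwise dominance in expectation. -/
theorem stmt14 {Ω : Type*} [MeasurableSpace Ω] (π : Measure Ω) [IsProbabilityMeasure π]
    (r z : ℕ) (hz : z ≤ r) (X Y : Ω → (Fin r → ℝ))
    (hX : memF π (R1star r) (R2star r z) X) (hY : memF π (R1star r) (R2star r z) Y)
    (hXi : ∀ j, Integrable (fun ω => X ω j) π) (hYi : ∀ j, Integrable (fun ω => Y ω j) π)
    (hGSD : GSDrel π (R1star r) (R2star r z) X Y) :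
    ∀ j, ∫ ω, Y ω j ∂π ≤ ∫ ω, X ω j ∂π := by
  intro j
  set SX : ℝ := ∑ k, ∫ ω, X ω k ∂π with hSX
  set SY : ℝ := ∑ k, ∫ ω, Y ω k ∂π with hSY
  have key : ∀ ε : ℝ, 0 < ε →
      ∫ ω, Y ω j ∂π + ε * SY ≤ ∫ ω, X ω j ∂π + ε * SX := by
    intro ε hε
    set w : Fin r → ℝ := fun k => (if k = j then 1 else 0) + ε with hwdef
    have hw : ∀ k, 0 < w k := by
      intro k; simp only [hwdef]; split <;> linarith
    have hrep := linRep r z w hw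
    have hmain := hGSD _ hrep
    have hcomp : ∀ (V : Ω → Fin r → ℝ), (∀ k, Integrable (fun ω => V ω k) π) →
        ∫ ω, ∑ k, w k * V ω k ∂π = ∫ ω, V ω j ∂π + ε * ∑ k, ∫ ω, V ω k ∂π := by
      intro V hVi
      rw [integral_finset_sum]
      · have : ∀ k ∈ Finset.univ, ∫ ω, w k * V ω k ∂π = w k * ∫ ω, V ω k ∂π := by
          intro k _; exact integral_const_mul _ _
        rw [Finset.sum_congr rfl this]
        simp only [hwdef, add_mul, ite_mul, one_mul, zero_mul, Finset.sum_add_distrib,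
          Finset.sum_ite_eq', Finset.mem_univ, if_true, Finset.mul_sum]
      · intro k _
        exact (hVi k).const_mul _
    rw [hcomp X hXi, hcomp Y hYi] at hmain
    exact hmain
  set a : ℝ := ∫ ω, Y ω j ∂π - ∫ ω, X ω j ∂π with ha
  have hkey : ∀ ε : ℝ, 0 < ε → a ≤ ε * (SX - SY) := by
    intro ε hε
    have := key ε hε
    simp only [ha, mul_sub]
    linarith
  by_contra hcon
  push_neg at hcon
  have hapos : 0 < a := by simp only [ha]; linarith
  set D := SX - SY with hD
  by_cases hDpos : 0 < D
  · have h1 := hkey (a / (2 * D)) (by positivity)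
    have : a / (2 * D) * D = a / 2 := by field_simp
    rw [this] at h1
    linarith
  · have h1 := hkey 1 one_pos
    push_neg at hDpos
    nlinarith


end GSD
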